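/- Let B be the real 3×3 matrix [[0,1,0],[0,0,1],[0,0,0]], let G be a symmetric nondegenerate real 3×3 matrix, and let α ∈ ℝ be such that Bᵀ·G + G·B = α·G. Then α = 0 and there exist real numbers β ≠ 0 and γ such that G = [[0, 0, −β], [0, β, 0], [−β, 0, γ]]. If moreover G has Lorentzian signature (1,2) (one negative and two positive eigenvalues), then β > 0. -/

import Mathlib

open Matrix

noncomputable section

/-- The nilpotent single Jordan block of size 3. -/
def Bmat : Matrix (Fin 3) (Fin 3) ℝ := !![0, 1, 0; 0, 0, 1; 0, 0, 0]

theorem stmt6 (G : Matrix (Fin 3) (Fin 3) ℝ) (hsymm : G.IsHermitian)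
    (hnd : G.det ≠ 0) (α : ℝ) (heq : Bmatᵀ * G + G * Bmat = α • G) :
    α = 0 ∧
    ∃ β γ : ℝ, β ≠ 0 ∧ G = !![0, 0, -β; 0, β, 0; -β, 0, γ] ∧
      -- if `G` has Lorentzian signature (1,2), i.e. one negative and two
      -- positive eigenvalues, then `β > 0`
      ((∃ i : Fin 3, hsymm.eigenvalues i < 0 ∧
          ∀ j : Fin 3, j ≠ i → 0 < hsymm.eigenvalues j) → 0 < β) := by
  have hS : ∀ i j, G j i = G i j := by
    intro i j
    simpa using (hsymm.apply j i).symm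
  have hBT : Bmatᵀ = !![0,0,0;1,0,0;0,1,0] := by
    ext i j; fin_cases i <;> fin_cases j <;> rfl
  rw [hBT] at heq
  have hE : ∀ i j, ((!![0,0,0;1,0,0;0,1,0] : Matrix (Fin 3) (Fin 3) ℝ) * G + G * Bmat) i j
      = α * G i j := by
    intro i j; rw [heq]; simp
  have h00 := hE 0 0
  have h01 := hE 0 1
  have h02 := hE 0 2
  have h11 := hE 1 1
  have h12 := hE 1 2
  have h22 := hE 2 2
  simp [Bmat, Matrix.mul_apply, Fin.sum_univ_three, Matrix.add_apply, Matrix.transpose_apply,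
    Matrix.cons_val_zero, Matrix.cons_val_one, Matrix.head_cons, Matrix.cons_val_two,
    Matrix.tail_cons, Matrix.head_fin_const, Matrix.vecMul, dotProduct,
    Matrix.vecHead, Matrix.vecTail] at h00 h01 h02 h11 h12 h22
  -- First show α = 0
  have hα : α = 0 := by
    by_contra hα
    rcases h00 with h00 | h00
    · exact hα h00
    have e01 : G 0 1 = 0 := by
      have : α * G 0 1 = 0 := by rw [← h01, h00]
      exact (mul_eq_zero.mp this).resolve_left hα
    have e02 : G 0 2 = 0 := by
      have : α * G 0 2 = 0 := by rw [← h02, e01]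
      exact (mul_eq_zero.mp this).resolve_left hα
    apply hnd
    rw [Matrix.det_fin_three, h00, e01, e02, hS 0 1, hS 0 2]
    ring
  subst hα
  simp only [zero_mul] at h01 h02 h11 h12 h22
  have e00 : G 0 0 = 0 := h01
  have e01 : G 0 1 = 0 := h02
  have e10 : G 1 0 = 0 := by rw [hS 0 1]; exact e01
  set β : ℝ := G 1 1 with hβ
  set γ : ℝ := G 2 2 with hγ
  have e02 : G 0 2 = -β := by linarith
  have e20 : G 2 0 = -β := by rw [hS 0 2]; exact e02
  have e12 : G 1 2 = 0 := by
    have := hS 1 2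
    linarith
  have e21 : G 2 1 = 0 := by rw [hS 1 2]; exact e12
  have hG : G = !![0, 0, -β; 0, β, 0; -β, 0, γ] := by
    ext i j
    fin_cases i <;> fin_cases j <;>
      simp [e00, e01, e10, e02, e20, e12, e21, hβ, hγ]
  have hdetval : G.det = -(β * β * β) := by
    rw [hG, Matrix.det_fin_three]
    simp
  have hβne : β ≠ 0 := by
    intro hb
    apply hnd
    rw [hdetval, hb]
    ring
  refine ⟨rfl, β, γ, hβne, hG, ?_⟩
  rintro ⟨i, hi, hj⟩
  have hprod : G.det = hsymm.eigenvalues 0 * (hsymm.eigenvalues 1 * hsymm.eigenvalues 2) := by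
    rw [hsymm.det_eq_prod_eigenvalues]
    simp [Fin.prod_univ_three, mul_assoc]
  have hdetneg : G.det < 0 := by
    rw [hprod]
    fin_cases i
    · have h1 := hj 1 (by decide)
      have h2 := hj 2 (by decide)
      exact mul_neg_of_neg_of_pos hi (mul_pos h1 h2)
    · have h1 := hj 0 (by decide)
      have h2 := hj 2 (by decide)
      exact mul_neg_of_pos_of_neg h1 (mul_neg_of_neg_of_pos hi h2)
    · have h1 := hj 0 (by decide)
      have h2 := hj 1 (by decide)
      exact mul_neg_of_pos_of_neg h1 (mul_neg_of_pos_of_neg h2 hi)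
  rw [hdetval] at hdetneg
  nlinarith [sq_nonneg β]
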